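/- With the setting of the embedding φ(x)(k) = (2c(k−1), 2ck + d(x,x_k)), c > diam X: any partial matching f between φ(x) and φ(y) that either leaves some index k unmatched or matches some index k to an index k' ≠ k has ∞-cost at least c. Consequently, since the identity matching has cost d(x,y) < c, the bottleneck distance between φ(x) and φ(y) equals d(x,y). -/

import Mathlib

open scoped ENNReal

noncomputable section

/-- The ℓ∞ metric on ℝ². -/
def dinf (a b : ℝ × ℝ) : ℝ := max |a.1 - b.1| |a.2 - b.2|

/-- The ℓ∞ distance from a point to the diagonal Δ. -/
def ddiag (a : ℝ × ℝ) : ℝ := (a.2 - a.1) / 2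

/-- A partial matching between two (indexed) persistence diagrams. -/
structure PartialMatching {I₁ I₂ : Type*} (D₁ : I₁ → ℝ × ℝ) (D₂ : I₂ → ℝ × ℝ) where
  S₁ : Set I₁
  S₂ : Set I₂
  f : S₁ → S₂
  bij : Function.Bijective f

/-- The ∞-cost of a partial matching. -/
def costInf {I₁ I₂ : Type*} {D₁ : I₁ → ℝ × ℝ} {D₂ : I₂ → ℝ × ℝ}
    (M : PartialMatching D₁ D₂) : ℝ≥0∞ :=
  max (⨆ i : M.S₁, ENNReal.ofReal (dinf (D₁ i.1) (D₂ (M.f i).1)))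
    (max (⨆ i : {i : I₁ // i ∉ M.S₁}, ENNReal.ofReal (ddiag (D₁ i.1)))
      (⨆ i : {i : I₂ // i ∉ M.S₂}, ENNReal.ofReal (ddiag (D₂ i.1))))

/-- The bottleneck distance between two diagrams. -/
def bottleneck {I₁ I₂ : Type*} (D₁ : I₁ → ℝ × ℝ) (D₂ : I₂ → ℝ × ℝ) : ℝ≥0∞ :=
  ⨅ M : PartialMatching D₁ D₂, costInf M

/-- The empty persistence diagram. -/
def emptyD : Empty → ℝ × ℝ := fun e => e.elim

/-- Any partial matching between `φ(x)` and `φ(y)` that leaves some index unmatched or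
matches some index `k` to an index `k' ≠ k` has ∞-cost at least `c`; consequently the
bottleneck distance between `φ(x)` and `φ(y)` equals `d(x,y)`. -/
theorem stmt9 {X : Type*} [MetricSpace X] (xs : ℕ → X) (hxs : DenseRange xs)
    (c : ℝ) (hbdd : Bornology.IsBounded (Set.univ : Set X))
    (hc : Metric.diam (Set.univ : Set X) < c)
    (φ : X → ℕ → ℝ × ℝ)
    (hφ : ∀ x k, φ x k = (2 * c * k, 2 * c * (k + 1) + dist x (xs k)))
    (x y : X) :
    (∀ M : PartialMatching (φ x) (φ y),
      (∃ k : ℕ, k ∉ M.S₁ ∨ k ∉ M.S₂ ∨ ∃ h : k ∈ M.S₁, (M.f ⟨k, h⟩).1 ≠ k) →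
      ENNReal.ofReal c ≤ costInf M) ∧
    bottleneck (φ x) (φ y) = ENNReal.ofReal (dist x y) := by
  have hc0 : 0 < c := lt_of_le_of_lt Metric.diam_nonneg hc
  have hdxy : dist x y < c :=
    lt_of_le_of_lt (Metric.dist_le_diam_of_mem hbdd (Set.mem_univ x) (Set.mem_univ y)) hc
  -- dinf at matched equal indices
  have hdinf : ∀ k : ℕ, dinf (φ x k) (φ y k) = |dist x (xs k) - dist y (xs k)| := by
    intro k
    rw [hφ, hφ]
    unfold dinf
    simp only [Prod.fst, Prod.snd]
    rw [sub_self, abs_zero, max_eq_right (abs_nonneg _)]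
    congr 1
    ring
  -- Part 1
  have part1 : ∀ M : PartialMatching (φ x) (φ y),
      (∃ k : ℕ, k ∉ M.S₁ ∨ k ∉ M.S₂ ∨ ∃ h : k ∈ M.S₁, (M.f ⟨k, h⟩).1 ≠ k) →
      ENNReal.ofReal c ≤ costInf M := by
    rintro M ⟨k, hk | hk | ⟨h, hne⟩⟩
    · refine le_trans ?_ (le_trans (le_max_left _ _) (le_max_right _ _))
      refine le_trans ?_
        (le_iSup (fun i : {i : ℕ // i ∉ M.S₁} => ENNReal.ofReal (ddiag (φ x i.1))) ⟨k, hk⟩)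
      apply ENNReal.ofReal_le_ofReal
      rw [hφ]
      unfold ddiag
      simp only [Prod.fst, Prod.snd]
      nlinarith [dist_nonneg (x := x) (y := xs k)]
    · refine le_trans ?_ (le_trans (le_max_right _ _) (le_max_right _ _))
      refine le_trans ?_
        (le_iSup (fun i : {i : ℕ // i ∉ M.S₂} => ENNReal.ofReal (ddiag (φ y i.1))) ⟨k, hk⟩)
      apply ENNReal.ofReal_le_ofReal
      rw [hφ]
      unfold ddiag
      simp only [Prod.fst, Prod.snd]
      nlinarith [dist_nonneg (x := y) (y := xs k)]
    · refine le_trans ?_ (le_max_left _ _)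
      refine le_trans ?_
        (le_iSup (fun i : M.S₁ => ENNReal.ofReal (dinf (φ x i.1) (φ y (M.f i).1))) ⟨k, h⟩)
      apply ENNReal.ofReal_le_ofReal
      set k' : ℕ := (M.f ⟨k, h⟩).1 with hk'
      rw [hφ, hφ]
      unfold dinf
      simp only [Prod.fst, Prod.snd]
      refine le_trans ?_ (le_max_left _ _)
      have h1 : (1 : ℝ) ≤ |(k : ℝ) - (k' : ℝ)| := by
        have hzne : ((k : ℤ) - (k' : ℤ)) ≠ 0 := by
          intro hz
          have h5 : (k : ℤ) = (k' : ℤ) := sub_eq_zero.mp hz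
          have h6 : k = k' := by exact_mod_cast h5
          exact hne h6.symm
        have := Int.one_le_abs hzne
        have heq : |(k : ℝ) - (k' : ℝ)| = ((|(k : ℤ) - (k' : ℤ)| : ℤ) : ℝ) := by
          push_cast [abs_sub_comm]
          rw [abs_sub_comm]
        rw [heq]
        exact_mod_cast this
      have h2 : |2 * c * (k : ℝ) - 2 * c * (k' : ℝ)| = 2 * c * |(k : ℝ) - (k' : ℝ)| := by
        rw [show 2 * c * (k : ℝ) - 2 * c * (k' : ℝ) = (2 * c) * ((k : ℝ) - (k' : ℝ)) by ring,
          abs_mul, abs_of_pos (show (0:ℝ) < 2 * c by linarith)]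
      nlinarith
  refine ⟨part1, le_antisymm ?_ ?_⟩
  · -- upper bound via identity matching
    have hbij : Function.Bijective
        (fun i : (Set.univ : Set ℕ) => (⟨i.1, Set.mem_univ _⟩ : (Set.univ : Set ℕ))) := by
      constructor
      · rintro ⟨a, _⟩ ⟨b, _⟩ hab
        simpa using hab
      · rintro ⟨b, _⟩
        exact ⟨⟨b, Set.mem_univ _⟩, rfl⟩
    refine le_trans (iInf_le _ (⟨Set.univ, Set.univ, fun i => ⟨i.1, Set.mem_univ _⟩, hbij⟩ :
      PartialMatching (φ x) (φ y))) ?_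
    unfold costInf
    refine max_le ?_ (max_le ?_ ?_)
    · refine iSup_le fun i => ?_
      apply ENNReal.ofReal_le_ofReal
      show dinf (φ x i.1) (φ y i.1) ≤ dist x y
      rw [hdinf]
      exact abs_dist_sub_le x y (xs i.1)
    · exact iSup_le fun i => absurd (Set.mem_univ i.1) i.2
    · exact iSup_le fun i => absurd (Set.mem_univ i.1) i.2
  · -- lower bound
    refine le_iInf fun M => ?_
    by_cases hdef : ∃ k : ℕ, k ∉ M.S₁ ∨ k ∉ M.S₂ ∨ ∃ h : k ∈ M.S₁, (M.f ⟨k, h⟩).1 ≠ k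
    · exact le_trans (ENNReal.ofReal_le_ofReal hdxy.le) (part1 M hdef)
    · push_neg at hdef
      refine ENNReal.le_of_forall_pos_le_add fun ε hε _ => ?_
      have hε2 : (0 : ℝ) < (ε : ℝ) / 2 := by positivity
      obtain ⟨k, hkd⟩ := hxs.exists_dist_lt y hε2
      have hmem := (hdef k).1
      have hfk := (hdef k).2.2 hmem
      have hterm : dist x y - (ε : ℝ) ≤ dinf (φ x k) (φ y (M.f ⟨k, hmem⟩).1) := by
        rw [hfk, hdinf]
        have h3 : dist x y ≤ dist x (xs k) + dist y (xs k) := dist_triangle_right x y (xs k)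
        have h4 : dist x (xs k) - dist y (xs k) ≤ |dist x (xs k) - dist y (xs k)| :=
          le_abs_self _
        linarith
      have hA : ENNReal.ofReal (dist x y - (ε : ℝ)) ≤ costInf M := by
        refine le_trans ?_ (le_max_left _ _)
        refine le_trans ?_
          (le_iSup (fun i : M.S₁ => ENNReal.ofReal (dinf (φ x i.1) (φ y (M.f i).1))) ⟨k, hmem⟩)
        exact ENNReal.ofReal_le_ofReal hterm
      calc ENNReal.ofReal (dist x y)
          = ENNReal.ofReal ((dist x y - (ε : ℝ)) + (ε : ℝ)) := by rw [sub_add_cancel]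
        _ ≤ ENNReal.ofReal (dist x y - (ε : ℝ)) + ENNReal.ofReal (ε : ℝ) :=
            ENNReal.ofReal_add_le
        _ ≤ costInf M + (ε : ℝ≥0∞) := by
            rw [ENNReal.ofReal_coe_nnreal]
            exact add_le_add hA le_rfl
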